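/- Let G be a connected simple graph on n vertices with largest Laplacian eigenvalue μ_n. Then σ(G) ≤ (μ_n/n)·σ_t(G), where σ(G) = Σ_{uv∈E(G)} (d(u) - d(v))². -/

import Mathlib

open Finset
open scoped Matrix

noncomputable def sigmaT {V : Type*} [Fintype V] (G : SimpleGraph V) [DecidableRel G.Adj] : ℝ :=
  (∑ u : V, ∑ v : V, ((G.degree u : ℝ) - (G.degree v : ℝ)) ^ 2) / 2

noncomputable def sigmaE {V : Type*} [Fintype V] (G : SimpleGraph V) [DecidableRel G.Adj] : ℝ :=
  (∑ u : V, ∑ v : V, if G.Adj u v then ((G.degree u : ℝ) - (G.degree v : ℝ)) ^ 2 else 0) / 2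

theorem stmt18 {V : Type*} [Fintype V] [DecidableEq V] (G : SimpleGraph V)
    [DecidableRel G.Adj] (hconn : G.Connected) (n : ℕ) (hn : n = Fintype.card V)
    (hL : (G.lapMatrix ℝ).IsHermitian) (μn : ℝ)
    (hmax : ∀ i, hL.eigenvalues i ≤ μn) (hmem : ∃ i, hL.eigenvalues i = μn) :
    sigmaE G ≤ μn / n * sigmaT G := by
  have hne : Nonempty V := hconn.nonempty
  have hnpos : 0 < (n : ℝ) := by
    rw [hn]; exact_mod_cast Fintype.card_pos
  set d : V → ℝ := fun v => (G.degree v : ℝ) with hd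
  set m : ℝ := (∑ v, d v) / n with hm
  set y : V → ℝ := fun v => d v - m with hy
  -- sigmaE = y ⬝ᵥ L *ᵥ y
  have h1 : sigmaE G = dotProduct y (Matrix.mulVec (G.lapMatrix ℝ) y) := by
    rw [← Matrix.toLinearMap₂'_apply', SimpleGraph.lapMatrix_toLinearMap₂']
    simp only [sigmaE, hy, sub_sub_sub_cancel_right]
    rfl
  -- sum of y is zero
  have hsum : ∑ v, y v = 0 := by
    simp only [hy, Finset.sum_sub_distrib, Finset.sum_const, Finset.card_univ, ← hn, hm,
      nsmul_eq_mul]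
    field_simp
    ring
  -- sigmaT = n * ∑ y²
  have hT : sigmaT G = n * (∑ v, y v ^ 2) := by
    have key : ∀ u v : V, (d u - d v) ^ 2 = y u ^ 2 + y v ^ 2 - 2 * (y u * y v) := by
      intro u v; simp only [hy]; ring
    have : sigmaT G = (∑ u : V, ∑ v : V, (y u ^ 2 + y v ^ 2 - 2 * (y u * y v))) / 2 := by
      show (∑ u : V, ∑ v : V, (d u - d v) ^ 2) / 2 = _
      simp only [key]
    rw [this]
    simp only [Finset.sum_sub_distrib, Finset.sum_add_distrib, Finset.sum_const,
      Finset.card_univ, ← hn, ← Finset.mul_sum, ← Finset.sum_mul, hsum, nsmul_eq_mul]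
    ring
  -- positive semidefiniteness of μn • 1 - L
  set U : Matrix V V ℝ := (hL.eigenvectorUnitary : Matrix V V ℝ) with hU
  have hUU : U * Uᴴ = 1 := Matrix.mem_unitaryGroup_iff.mp hL.eigenvectorUnitary.2
  have hMdec : μn • (1 : Matrix V V ℝ) - G.lapMatrix ℝ
      = U * Matrix.diagonal (fun i => μn - hL.eigenvalues i) * Uᴴ := by
    have hspec := hL.spectral_theorem
    have hdiag : Matrix.diagonal (fun i : V => μn - hL.eigenvalues i)
        = μn • (1 : Matrix V V ℝ) - Matrix.diagonal (RCLike.ofReal ∘ hL.eigenvalues) := by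
      rw [Matrix.smul_one_eq_diagonal, ← Matrix.diagonal_sub]
      congr 1
    have hspec' : G.lapMatrix ℝ = U * Matrix.diagonal (RCLike.ofReal ∘ hL.eigenvalues) * Uᴴ :=
      hspec
    rw [hdiag, Matrix.mul_sub, Matrix.sub_mul, Matrix.mul_smul, Matrix.mul_one,
      Matrix.smul_mul, hUU, ← hspec']
  have hPSD : Matrix.PosSemidef (μn • (1 : Matrix V V ℝ) - G.lapMatrix ℝ) := by
    rw [hMdec]
    exact (Matrix.PosSemidef.diagonal (fun i => sub_nonneg.mpr (hmax i))).mul_mul_conjTranspose_same U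
  have hray : dotProduct y (Matrix.mulVec (G.lapMatrix ℝ) y) ≤ μn * (∑ v, y v ^ 2) := by
    have h0 := hPSD.dotProduct_mulVec_nonneg y
    rw [star_trivial, Matrix.sub_mulVec, dotProduct_sub, Matrix.smul_mulVec,
      Matrix.one_mulVec, dotProduct_smul, smul_eq_mul, sub_nonneg] at h0
    calc dotProduct y (Matrix.mulVec (G.lapMatrix ℝ) y) ≤ μn * dotProduct y y := h0
      _ = μn * (∑ v, y v ^ 2) := by
          simp [dotProduct, sq]
  rw [h1, hT, ← mul_assoc, div_mul_cancel₀ _ (ne_of_gt hnpos)]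
  exact hray
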